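/- Under Assumptions of smoothness (L-Lipschitz gradient), convexity, and compact convex constraint X of diameter D, the ExtraFW iterates with δ_k = 2/(k+3) and g_0 = 0 satisfy f(x_k) − f(x*) ≤ 2(f(x_0) − f(x*))/((k+1)(k+2)) + 6LD²/(k+2) for all k ≥ 0. -/

import Mathlib

open scoped RealInnerProductSpace

variable {E : Type*} [NormedAddCommGroup E] [InnerProductSpace ℝ E] [CompleteSpace E]

lemma line_hasDerivAt {f : E → ℝ} {g : E → E} (hgrad : ∀ x, HasGradientAt f (g x) x)
    (a w : E) (t : ℝ) :
    HasDerivAt (fun s : ℝ => f (a + s • w)) ⟪g (a + t • w), w⟫ t := by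
  have hline : HasDerivAt (fun s : ℝ => a + s • w) w t := by
    simpa using ((hasDerivAt_id t).smul_const w).const_add a
  have hf := (hgrad (a + t • w)).hasFDerivAt
  have := hf.comp_hasDerivAt t hline
  simpa [InnerProductSpace.toDual_apply_apply, Function.comp_def] using this

lemma grad_convex_ineq {X : Set E} {f : E → ℝ} {g : E → E}
    (hgrad : ∀ x, HasGradientAt f (g x) x) (hconv : ConvexOn ℝ X f)
    {y u : E} (hy : y ∈ X) (hu : u ∈ X) :
    ⟪g y, u - y⟫ ≤ f u - f y := by
  set φ : ℝ → ℝ := fun s => f (y + s • (u - y)) with hφ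
  have hder : HasDerivAt φ ⟪g y, u - y⟫ 0 := by
    simpa using line_hasDerivAt hgrad y (u - y) 0
  have hslope : Filter.Tendsto (slope φ 0) (nhdsWithin 0 (Set.Ioi 0)) (nhds ⟪g y, u - y⟫) := by
    have := (hder.hasDerivWithinAt (s := Set.Ioi (0:ℝ)))
    rw [hasDerivWithinAt_iff_tendsto_slope] at this
    simpa [Set.diff_singleton_eq_self (by simp : (0:ℝ) ∉ Set.Ioi (0:ℝ))] using this
  refine le_of_tendsto hslope ?_
  filter_upwards [Ioo_mem_nhdsGT_of_mem (by constructor <;> norm_num : (0:ℝ) ∈ Set.Ico 0 1)]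
    with t ht
  have ht0 : 0 < t := ht.1
  have ht1 : t ≤ 1 := le_of_lt ht.2
  have hcomb : y + t • (u - y) = (1 - t) • y + t • u := by
    rw [smul_sub]; module
  have hmem := hconv.2 hy hu (by linarith : (0:ℝ) ≤ 1 - t) (le_of_lt ht0) (by ring)
  rw [← hcomb] at hmem
  have : φ t ≤ (1 - t) * f y + t * f u := hmem
  have hφ0 : φ 0 = f y := by simp [hφ]
  rw [slope_def_field, hφ0]
  rw [sub_zero, div_le_iff₀ ht0]
  nlinarith [this]

lemma descent_lemma {X : Set E} (hXconv : Convex ℝ X) {f : E → ℝ} {g : E → E}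
    (hgrad : ∀ x, HasGradientAt f (g x) x) {L : ℝ} (hL : 0 ≤ L)
    (hlip : ∀ x ∈ X, ∀ y ∈ X, ‖g x - g y‖ ≤ L * ‖x - y‖)
    {a b : E} (ha : a ∈ X) (hb : b ∈ X) :
    f b ≤ f a + ⟪g a, b - a⟫ + L / 2 * ‖b - a‖ ^ 2 := by
  set w := b - a with hw
  set ψ : ℝ → ℝ := fun t => f (a + t • w) - t * ⟪g a, w⟫ - t ^ 2 * (L / 2 * ‖w‖ ^ 2) with hψ
  have hder : ∀ t : ℝ, HasDerivAt ψ (⟪g (a + t • w), w⟫ - ⟪g a, w⟫ - 2 * t * (L / 2 * ‖w‖ ^ 2)) t := by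
    intro t
    have h1 := line_hasDerivAt hgrad a w t
    have h2 : HasDerivAt (fun t : ℝ => t * ⟪g a, w⟫) ⟪g a, w⟫ t := by
      simpa using (hasDerivAt_id t).mul_const ⟪g a, w⟫
    have h3 : HasDerivAt (fun t : ℝ => t ^ 2 * (L / 2 * ‖w‖ ^ 2)) (2 * t * (L / 2 * ‖w‖ ^ 2)) t := by
      simpa using (hasDerivAt_pow 2 t).mul_const (L / 2 * ‖w‖ ^ 2)
    exact (h1.sub h2).sub h3
  have hanti : AntitoneOn ψ (Set.Icc 0 1) := by
    apply antitoneOn_of_deriv_nonpos (convex_Icc 0 1)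
    · exact fun t _ => (hder t).continuousAt.continuousWithinAt
    · exact fun t _ => ((hder t).differentiableAt).differentiableWithinAt
    · intro t ht
      rw [interior_Icc] at ht
      rw [(hder t).deriv]
      have hmem : a + t • w ∈ X := by
        have : a + t • w = (1 - t) • a + t • b := by rw [hw, smul_sub]; module
        rw [this]
        exact hXconv ha hb (by linarith [ht.2]) (le_of_lt ht.1) (by ring)
      have hcs : ⟪g (a + t • w) - g a, w⟫ ≤ ‖g (a + t • w) - g a‖ * ‖w‖ :=
        real_inner_le_norm _ _
      have hlb : ‖g (a + t • w) - g a‖ ≤ L * (t * ‖w‖) := by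
        have := hlip _ hmem _ ha
        simpa [norm_smul, abs_of_pos ht.1] using this
      have h0 : ⟪g (a + t • w), w⟫ - ⟪g a, w⟫ ≤ L * t * ‖w‖ ^ 2 := by
        rw [← inner_sub_left]
        calc ⟪g (a + t • w) - g a, w⟫ ≤ ‖g (a + t • w) - g a‖ * ‖w‖ := hcs
          _ ≤ L * (t * ‖w‖) * ‖w‖ := by
              apply mul_le_mul_of_nonneg_right hlb (norm_nonneg _)
          _ = L * t * ‖w‖ ^ 2 := by ring
      nlinarith [h0]
  have h01 := hanti (Set.mem_Icc.2 ⟨le_refl 0, by norm_num⟩) (Set.mem_Icc.2 ⟨by norm_num, le_refl 1⟩) (by norm_num)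
  have hψ0 : ψ 0 = f a := by simp [hψ]
  have hψ1 : ψ 1 = f b - ⟪g a, w⟫ - L / 2 * ‖w‖ ^ 2 := by
    simp only [hψ, one_smul, one_pow, one_mul]
    rw [hw]
    ring_nf
    rw [add_sub_cancel]
    ring
  rw [hψ0, hψ1] at h01
  linarith

lemma rec_bound {h0 c K p q : ℝ} (hh0 : 0 ≤ h0) (hc : 0 < c) (hK : 0 ≤ K)
    (hq : q ≤ 2*h0/((K+1)*(K+2)) + 6*c/(K+2))
    (hp : p ≤ (1 - 2/(K+3)) * q + 3/2 * (2/(K+3))^2 * c) :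
    p ≤ 2*h0/((K+2)*(K+3)) + 6*c/(K+3) := by
  have hp1 : (0:ℝ) < K + 1 := by linarith
  have hp2 : (0:ℝ) < K + 2 := by linarith
  have hp3 : (0:ℝ) < K + 3 := by linarith
  have hfac : 0 ≤ 1 - 2/(K+3) := by
    rw [sub_nonneg, div_le_one hp3]; linarith
  have hmul := mul_le_mul_of_nonneg_left hq hfac
  have e1 : (1 - 2/(K+3)) * (2*h0/((K+1)*(K+2)) + 6*c/(K+2))
      = 2*h0/((K+2)*(K+3)) + 6*c/(K+3) - 6*c/((K+2)*(K+3)^2) - 3/2*(2/(K+3))^2*c := by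
    field_simp
    ring
  have e2 : 0 ≤ 6*c/((K+2)*(K+3)^2) := by positivity
  linarith

/-- Convergence of ExtraFW with step sizes `δ_k = 2/(k+3)` and `g_0 = 0`:
`f(x_k) − f(x*) ≤ 2(f(x_0) − f(x*))/((k+1)(k+2)) + 6LD²/(k+2)`. -/
theorem extrafw_convergence
    {d : ℕ} (X : Set (EuclideanSpace ℝ (Fin d)))
    (hXconv : Convex ℝ X) (hXcomp : IsCompact X)
    (f : EuclideanSpace ℝ (Fin d) → ℝ)
    (gradf : EuclideanSpace ℝ (Fin d) → EuclideanSpace ℝ (Fin d))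
    (hgrad : ∀ x, HasGradientAt f (gradf x) x)
    (hconv : ConvexOn ℝ X f)
    (L D : ℝ) (hL : 0 < L) (hD : 0 < D)
    (hlip : ∀ x ∈ X, ∀ y ∈ X, ‖gradf x - gradf y‖ ≤ L * ‖x - y‖)
    (hdiam : ∀ x ∈ X, ∀ y ∈ X, ‖x - y‖ ≤ D)
    (δ : ℕ → ℝ) (hδ : ∀ k, δ k = 2 / ((k : ℝ) + 3))
    (x v vhat y g ghat : ℕ → EuclideanSpace ℝ (Fin d))
    (hx0 : x 0 ∈ X) (hv0 : v 0 = x 0) (hg0 : g 0 = 0)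
    (hy : ∀ k, y k = (1 - δ k) • x k + δ k • v k)
    (hghat : ∀ k, ghat (k+1) = (1 - δ k) • g k + δ k • gradf (y k))
    (hvhat : ∀ k, vhat (k+1) ∈ X ∧
      ∀ u ∈ X, ⟪ghat (k+1), vhat (k+1)⟫ ≤ ⟪ghat (k+1), u⟫)
    (hxrec : ∀ k, x (k+1) = (1 - δ k) • x k + δ k • vhat (k+1))
    (hgrec : ∀ k, g (k+1) = (1 - δ k) • g k + δ k • gradf (x (k+1)))
    (hv : ∀ k, v (k+1) ∈ X ∧ ∀ u ∈ X, ⟪g (k+1), v (k+1)⟫ ≤ ⟪g (k+1), u⟫)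
    (xstar : EuclideanSpace ℝ (Fin d)) (hxstar : xstar ∈ X)
    (hmin : ∀ u ∈ X, f xstar ≤ f u) :
    ∀ k, f (x k) - f xstar ≤
      2 * (f (x 0) - f xstar) / (((k : ℝ) + 1) * ((k : ℝ) + 2)) +
        6 * L * D^2 / ((k : ℝ) + 2) := by
  have hD0 : (0:ℝ) ≤ D := le_of_lt hD
  have hL0 : (0:ℝ) ≤ L := le_of_lt hL
  have hδpos : ∀ k : ℕ, 0 < δ k := by
    intro k; rw [hδ]; positivity
  have hδle : ∀ k : ℕ, δ k ≤ 1 := by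
    intro k; rw [hδ, div_le_one (by positivity)]
    have : (0:ℝ) ≤ (k:ℝ) := Nat.cast_nonneg k
    linarith
  have hmemx : ∀ k, x k ∈ X := by
    intro k; induction k with
    | zero => exact hx0
    | succ n ih =>
      rw [hxrec n]
      exact hXconv ih (hvhat n).1 (by linarith [hδle n]) (le_of_lt (hδpos n)) (by ring)
  have hmemv : ∀ k, v k ∈ X := by
    intro k; cases k with
    | zero => rw [hv0]; exact hx0
    | succ n => exact (hv n).1
  have hmemy : ∀ k, y k ∈ X := by
    intro k; rw [hy k]
    exact hXconv (hmemx k) (hmemv k) (by linarith [hδle k]) (le_of_lt (hδpos k)) (by ring)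
  have hsnn : ∀ k, 0 ≤ ⟪g k, xstar - v k⟫ := by
    intro k
    cases k with
    | zero => rw [hg0]; simp
    | succ n =>
      have := (hv n).2 xstar hxstar
      rw [inner_sub_right]; linarith
  have hh0 : 0 ≤ f (x 0) - f xstar := by linarith [hmin (x 0) (hmemx 0)]
  -- key one-step recursion for the Lyapunov function ψ k = h k + s k
  have hrec : ∀ k, (f (x (k+1)) - f xstar) + ⟪g (k+1), xstar - v (k+1)⟫ ≤
      (1 - δ k) * ((f (x k) - f xstar) + ⟪g k, xstar - v k⟫)
        + 3/2 * (δ k)^2 * (L * D^2) := by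
    intro k
    have hd0 : 0 < δ k := hδpos k
    have hd1 : δ k ≤ 1 := hδle k
    have hxy : x (k+1) - y k = δ k • (vhat (k+1) - v k) := by
      rw [hxrec k, hy k, smul_sub]; abel
    have hnxy : ‖x (k+1) - y k‖ ≤ δ k * D := by
      rw [hxy, norm_smul, Real.norm_eq_abs, abs_of_pos hd0]
      exact mul_le_mul_of_nonneg_left (hdiam _ (hvhat k).1 _ (hmemv k)) (le_of_lt hd0)
    have T2 : ⟪g (k+1), xstar - v (k+1)⟫ = ⟪ghat (k+1), xstar - v (k+1)⟫
        + δ k * ⟪gradf (x (k+1)) - gradf (y k), xstar - v (k+1)⟫ := by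
      have hgg : g (k+1) = ghat (k+1) + δ k • (gradf (x (k+1)) - gradf (y k)) := by
        rw [hgrec k, hghat k, smul_sub]; abel
      rw [hgg, inner_add_left, real_inner_smul_left]
    have T3 : ⟪gradf (x (k+1)) - gradf (y k), xstar - v (k+1)⟫ ≤ L * (δ k * D) * D := by
      calc ⟪gradf (x (k+1)) - gradf (y k), xstar - v (k+1)⟫
          ≤ ‖gradf (x (k+1)) - gradf (y k)‖ * ‖xstar - v (k+1)‖ := real_inner_le_norm _ _
        _ ≤ (L * (δ k * D)) * D := by
            apply mul_le_mul _ (hdiam _ hxstar _ (hmemv (k+1))) (norm_nonneg _) (by positivity)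
            calc ‖gradf (x (k+1)) - gradf (y k)‖
                ≤ L * ‖x (k+1) - y k‖ := hlip _ (hmemx (k+1)) _ (hmemy k)
              _ ≤ L * (δ k * D) := mul_le_mul_of_nonneg_left hnxy hL0
        _ = L * (δ k * D) * D := rfl
    have T3' : δ k * ⟪gradf (x (k+1)) - gradf (y k), xstar - v (k+1)⟫
        ≤ δ k * (L * (δ k * D) * D) := mul_le_mul_of_nonneg_left T3 (le_of_lt hd0)
    have T1 : ⟪ghat (k+1), xstar - v (k+1)⟫ ≤ ⟪ghat (k+1), xstar - vhat (k+1)⟫ := by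
      rw [inner_sub_right, inner_sub_right]
      exact sub_le_sub_left ((hvhat k).2 (v (k+1)) (hmemv (k+1))) _
    have T4 : ⟪ghat (k+1), xstar - vhat (k+1)⟫ = (1 - δ k) * ⟪g k, xstar - vhat (k+1)⟫
        + δ k * ⟪gradf (y k), xstar - vhat (k+1)⟫ := by
      rw [hghat k, inner_add_left, real_inner_smul_left, real_inner_smul_left]
    have T5 : ⟪g k, xstar - vhat (k+1)⟫ ≤ ⟪g k, xstar - v k⟫ := by
      rw [inner_sub_right, inner_sub_right]
      have hvk : ⟪g k, v k⟫ ≤ ⟪g k, vhat (k+1)⟫ := by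
        cases k with
        | zero => rw [hg0]; simp
        | succ n => exact (hv n).2 _ (hvhat (n+1)).1
      exact sub_le_sub_left hvk _
    have T5' : (1 - δ k) * ⟪g k, xstar - vhat (k+1)⟫ ≤ (1 - δ k) * ⟪g k, xstar - v k⟫ :=
      mul_le_mul_of_nonneg_left T5 (by linarith)
    have T6 : δ k * ⟪gradf (y k), xstar - vhat (k+1)⟫ =
        δ k * ⟪gradf (y k), xstar - v k⟫ + ⟪gradf (y k), y k - x (k+1)⟫ := by
      rw [← real_inner_smul_right, ← real_inner_smul_right, ← inner_add_right]
      congr 1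
      rw [hxrec k, hy k, smul_sub, smul_sub]
      abel
    have T7 : δ k * ⟪gradf (y k), xstar - v k⟫
        ≤ (1 - δ k) * f (x k) + δ k * f xstar - f (y k) := by
      have humem : (1 - δ k) • x k + δ k • xstar ∈ X :=
        hXconv (hmemx k) hxstar (by linarith) (le_of_lt hd0) (by ring)
      have hgi := grad_convex_ineq hgrad hconv (hmemy k) humem
      have hfu : f ((1 - δ k) • x k + δ k • xstar) ≤ (1 - δ k) * f (x k) + δ k * f xstar := by
        have := hconv.2 (hmemx k) hxstar (by linarith : (0:ℝ) ≤ 1 - δ k)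
          (le_of_lt hd0) (by ring)
        simpa [smul_eq_mul] using this
      have hueq : (1 - δ k) • x k + δ k • xstar - y k = δ k • (xstar - v k) := by
        rw [hy k, smul_sub]; abel
      rw [hueq, real_inner_smul_right] at hgi
      linarith
    have T8 : ⟪gradf (y k), y k - x (k+1)⟫ ≤ f (y k) - f (x (k+1)) + L/2 * (δ k * D)^2 := by
      have hdes := descent_lemma hXconv hgrad hL0 hlip (hmemy k) (hmemx (k+1))
      have hn2 : ‖x (k+1) - y k‖^2 ≤ (δ k * D)^2 :=
        pow_le_pow_left₀ (norm_nonneg _) hnxy 2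
      have hneg : ⟪gradf (y k), y k - x (k+1)⟫ = - ⟪gradf (y k), x (k+1) - y k⟫ := by
        rw [← inner_neg_right]; congr 1; abel
      rw [hneg]
      nlinarith [hdes, hn2]
    linarith [T1, T2, T3', T4, T5', T6, T7, T8]
  -- solve the recursion by induction
  have hpsi : ∀ k : ℕ, (f (x k) - f xstar) + ⟪g k, xstar - v k⟫ ≤
      2 * (f (x 0) - f xstar) / (((k:ℝ)+1) * ((k:ℝ)+2)) + 6 * (L * D^2) / ((k:ℝ)+2) := by
    intro k; induction k with
    | zero =>
      rw [hg0]
      simp only [inner_zero_left, add_zero, Nat.cast_zero]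
      norm_num
      nlinarith [hh0, mul_pos hL (mul_pos hD hD)]
    | succ n ih =>
      have hr := hrec n
      rw [hδ n] at hr
      have hfin := rec_bound (c := L * D^2) hh0 (by positivity) (Nat.cast_nonneg n) ih hr
      push_cast
      have e : ((n:ℝ)+1+1) = (n:ℝ)+2 := by ring
      have e' : ((n:ℝ)+1+2) = (n:ℝ)+3 := by ring
      rw [e, e']
      exact hfin
  intro k
  have h1 := hpsi k
  have h2 := hsnn k
  have h3 : 6 * (L * D^2) / ((k:ℝ)+2) = 6 * L * D^2 / ((k:ℝ)+2) := by ring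
  linarith [h3.le, h3.ge]
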